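/- Let Σ* be an N×N symmetric positive definite matrix with blocks A, B, C, D, C = B^T, and Δ as above (last N−M coordinates equal C A^{-1} Δ̃). Then 1_N^T Σ*^{-1} Δ = 1_M^T A^{-1} Δ̃. -/

import Mathlib

open Matrix

theorem A_posdef {M L : ℕ}
    (S : Matrix (Fin M ⊕ Fin L) (Fin M ⊕ Fin L) ℝ) (hS : S.PosDef) :
    (S.toBlocks₁₁).PosDef := by
  refine PosDef.of_dotProduct_mulVec_pos ?_ ?_
  · ext i j
    have := congrFun (congrFun hS.1 (Sum.inl i)) (Sum.inl j)
    simpa [toBlocks₁₁, conjTranspose, Matrix.transpose] using this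
  · intro x hx
    have hx' : (Sum.elim x (0 : Fin L → ℝ)) ≠ 0 := by
      intro h
      apply hx
      ext i
      exact congrFun h (Sum.inl i)
    have := hS.dotProduct_mulVec_pos hx'
    convert this using 1
    simp [dotProduct, mulVec, Fintype.sum_sum_type, toBlocks₁₁]

/-- For symmetric positive definite `Σ*` with blocks `A, B, C, D` and
`Δ = (Δ̃, C A⁻¹ Δ̃)`, one has `1_Nᵀ Σ*⁻¹ Δ = 1_Mᵀ A⁻¹ Δ̃`. -/
theorem ones_dot_inv_mulVec_constrained {M L : ℕ}
    (S : Matrix (Fin M ⊕ Fin L) (Fin M ⊕ Fin L) ℝ) (hS : S.PosDef) (Δt : Fin M → ℝ) :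
    (fun _ => (1 : ℝ)) ⬝ᵥ
        (S⁻¹ *ᵥ (Sum.elim Δt ((S.toBlocks₂₁ * (S.toBlocks₁₁)⁻¹) *ᵥ Δt))) =
      (fun _ => (1 : ℝ)) ⬝ᵥ ((S.toBlocks₁₁)⁻¹ *ᵥ Δt) := by
  have hA := A_posdef S hS
  have hAdet : IsUnit (S.toBlocks₁₁).det := (isUnit_iff_isUnit_det _).1 hA.isUnit
  have hSdet : IsUnit S.det := (isUnit_iff_isUnit_det _).1 hS.isUnit
  have hAinv : S.toBlocks₁₁ * (S.toBlocks₁₁)⁻¹ = 1 := mul_nonsing_inv _ hAdet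
  have key : S *ᵥ Sum.elim ((S.toBlocks₁₁)⁻¹ *ᵥ Δt) 0 =
      Sum.elim Δt ((S.toBlocks₂₁ * (S.toBlocks₁₁)⁻¹) *ᵥ Δt) := by
    funext i
    cases i with
    | inl a =>
      have h1 : (S.toBlocks₁₁ *ᵥ ((S.toBlocks₁₁)⁻¹ *ᵥ Δt)) a = Δt a := by
        rw [mulVec_mulVec, hAinv, one_mulVec]
      simpa [mulVec, dotProduct, Fintype.sum_sum_type, toBlocks₁₁] using h1
    | inr b =>
      have h1 : (S.toBlocks₂₁ *ᵥ ((S.toBlocks₁₁)⁻¹ *ᵥ Δt)) b =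
          ((S.toBlocks₂₁ * (S.toBlocks₁₁)⁻¹) *ᵥ Δt) b := by
        rw [mulVec_mulVec]
      simpa [mulVec, dotProduct, Fintype.sum_sum_type, toBlocks₂₁] using h1
  rw [← key, mulVec_mulVec, nonsing_inv_mul S hSdet, one_mulVec]
  simp [dotProduct, Fintype.sum_sum_type]
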